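/- Let S = (X_α, r^β_α, κ) be a continuous inverse sequence of compact Hausdorff spaces indexed by an ordinal κ such that r^{α+1}_α : X_{α+1} → X_α is a retraction for every α with α+1 < κ. Then S has a right inverse, i.e. there exists a family of continuous maps i^β_α : X_α → X_β (α ≤ β < κ) with i^α_α = id, r^β_α ∘ i^β_α = id_{X_α} and i^γ_β ∘ i^β_α = i^γ_α for α ≤ β ≤ γ. -/

import Mathlib

open Set Filter Topology
set_option linter.unusedSectionVars false

universe u

/-- A continuous inverse sequence over a well-ordered index set `ι` (representing an
ordinal): continuous surjective bonding maps with identity and composition laws,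
such that at every limit point `δ` of `ι` the map `X δ → Π_{α<δ} X α` is injective. -/
structure IsContInvSeq {ι : Type*} [LinearOrder ι] {X : ι → Type*}
    [∀ α, TopologicalSpace (X α)]
    (r : ∀ ⦃α β : ι⦄, α ≤ β → X β → X α) : Prop where
  continuous : ∀ ⦃α β : ι⦄ (h : α ≤ β), Continuous (r h)
  surjective : ∀ ⦃α β : ι⦄ (h : α ≤ β), Function.Surjective (r h)
  map_id : ∀ (α : ι) (x : X α), r (le_refl α) x = x
  map_comp : ∀ ⦃α β γ : ι⦄ (h₁ : α ≤ β) (h₂ : β ≤ γ) (x : X γ),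
    r h₁ (r h₂ x) = r (h₁.trans h₂) x
  limit_inj : ∀ δ : ι, (∃ α, α < δ) → (∀ α, α < δ → ∃ β, α < β ∧ β < δ) →
    ∀ x y : X δ, (∀ (α : ι) (h : α < δ), r h.le x = r h.le y) → x = y

/-- The limit of an inverse sequence: the space of threads, a subspace of the
product `Π α, X α`. -/
abbrev InvLim {ι : Type*} [LinearOrder ι] {X : ι → Type*}
    [∀ α, TopologicalSpace (X α)]
    (r : ∀ ⦃α β : ι⦄, α ≤ β → X β → X α) : Type _ :=
  {x : ∀ α, X α // ∀ ⦃α β : ι⦄ (h : α ≤ β), r h (x β) = x α}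

/-- A continuous surjection which admits a continuous right inverse. -/
def IsRetraction {X Y : Type*} [TopologicalSpace X] [TopologicalSpace Y]
    (f : X → Y) : Prop :=
  Continuous f ∧ Function.Surjective f ∧ ∃ g : Y → X, Continuous g ∧ f ∘ g = id

section Aux

variable {ι : Type*} [LinearOrder ι] {X : ι → Type u}
  [∀ α, TopologicalSpace (X α)] [∀ α, CompactSpace (X α)] [∀ α, T2Space (X α)]
  {r : ∀ ⦃α β : ι⦄, α ≤ β → X β → X α}

/-- Default (non-continuous) pointwise section of a bonding map. -/
noncomputable def dfltSec (hseq : IsContInvSeq r) : ∀ ⦃α β : ι⦄, α ≤ β → X α → X β :=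
  fun _ _ h => Function.surjInv (hseq.surjective h)

lemma dfltSec_sec (hseq : IsContInvSeq r) ⦃α β : ι⦄ (h : α ≤ β) (x : X α) :
    r h (dfltSec hseq h x) = x :=
  Function.surjInv_eq _ x

lemma dfltSec_refl (hseq : IsContInvSeq r) ⦃α : ι⦄ (h : α ≤ α) (x : X α) :
    dfltSec hseq h x = x := by
  have h1 : r h (dfltSec hseq h x) = x := dfltSec_sec hseq h x
  have h2 : r h (dfltSec hseq h x) = dfltSec hseq h x :=
    hseq.map_id α (dfltSec hseq h x)
  exact h2.symm.trans h1

lemma exists_lift (hseq : IsContInvSeq r) {δ : ι} (hne : ∃ α, α < δ)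
    (t : ∀ γ, γ < δ → X γ)
    (ht : ∀ ⦃γ γ' : ι⦄ (h : γ ≤ γ') (hγ' : γ' < δ),
      r h (t γ' hγ') = t γ (lt_of_le_of_lt h hγ')) :
    ∃ y : X δ, ∀ γ (hγ : γ < δ), r hγ.le y = t γ hγ := by
  have hι : Nonempty {γ // γ < δ} := ⟨⟨hne.choose, hne.choose_spec⟩⟩
  set C : {γ // γ < δ} → Set (X δ) := fun γ => (r γ.2.le) ⁻¹' {t γ.1 γ.2} with hC
  have hmono : ∀ (γ γ' : {γ // γ < δ}), γ.1 ≤ γ'.1 → C γ' ⊆ C γ := by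
    intro γ γ' h y hy
    simp only [C, mem_preimage, mem_singleton_iff] at hy ⊢
    rw [← hseq.map_comp h γ'.2.le y, hy, ht h γ'.2]
  have hdir : Directed (· ⊇ ·) C := by
    intro γ γ'
    rcases le_total γ.1 γ'.1 with h | h
    · exact ⟨γ', hmono _ _ h, subset_rfl⟩
    · exact ⟨γ, subset_rfl, hmono _ _ h⟩
  have hCne : ∀ γ, (C γ).Nonempty := by
    intro γ
    obtain ⟨y, hy⟩ := hseq.surjective γ.2.le (t γ.1 γ.2)
    exact ⟨y, by simp [C, hy]⟩
  have hCcl : ∀ γ, IsClosed (C γ) :=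
    fun γ => isClosed_singleton.preimage (hseq.continuous γ.2.le)
  obtain ⟨y, hy⟩ := IsCompact.nonempty_iInter_of_directed_nonempty_isCompact_isClosed
    C hdir hCne (fun γ => (hCcl γ).isCompact) hCcl
  refine ⟨y, fun γ hγ => ?_⟩
  have := mem_iInter.1 hy ⟨γ, hγ⟩
  simpa [C] using this

lemma continuous_of_comp (hseq : IsContInvSeq r) {δ : ι} (hne : ∃ α, α < δ)
    (hlim : ∀ α, α < δ → ∃ β, α < β ∧ β < δ)
    {Z : Type*} [TopologicalSpace Z] {f : Z → X δ}
    (hf : ∀ γ (hγ : γ < δ), Continuous fun z => r hγ.le (f z)) : Continuous f := by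
  set e : X δ → ∀ γ : {γ // γ < δ}, X γ.1 := fun y γ => r γ.2.le y with he
  have hecont : Continuous e := continuous_pi fun γ => hseq.continuous γ.2.le
  have heinj : Function.Injective e := by
    intro x y hxy
    exact hseq.limit_inj δ hne hlim x y fun γ hγ => congrFun hxy ⟨γ, hγ⟩
  have hemb := hecont.isClosedEmbedding heinj
  rw [hemb.isEmbedding.continuous_iff]
  exact continuous_pi fun γ => hf γ.1 γ.2

lemma row_refl (hseq : IsContInvSeq r)
    {j : ∀ ⦃α β : ι⦄, α ≤ β → X α → X β} {α : ι}
    (hsec : ∀ (h : α ≤ α) (x : X α), r h (j h x) = x)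
    (h : α ≤ α) (x : X α) : j h x = x := by
  have h2 : r h (j h x) = j h x := hseq.map_id α (j h x)
  exact h2.symm.trans (hsec h x)

lemma limit_row (hseq : IsContInvSeq r) {δ : ι} (hne : ∃ α, α < δ)
    (hlim : ∀ α, α < δ → ∃ β, α < β ∧ β < δ)
    (j : ∀ ⦃α β : ι⦄, α ≤ β → X α → X β)
    (jcont : ∀ ⦃α β : ι⦄, β < δ → ∀ (h : α ≤ β), Continuous (j h))
    (jsec : ∀ ⦃α β : ι⦄, β < δ → ∀ (h : α ≤ β) (x : X α), r h (j h x) = x)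
    (jcomp : ∀ ⦃α β γ : ι⦄, γ < δ → ∀ (h₁ : α ≤ β) (h₂ : β ≤ γ) (x : X α),
      j h₂ (j h₁ x) = j (h₁.trans h₂) x) :
    ∃ f : ∀ ⦃α : ι⦄, α < δ → X α → X δ,
      (∀ ⦃α : ι⦄ (hα : α < δ), Continuous (f hα)) ∧
      (∀ ⦃α : ι⦄ (hα : α < δ) ⦃γ : ι⦄ (hγ : γ < δ) (x : X α),
        r hγ.le (f hα x) = if h : α ≤ γ then j h x else r (le_of_not_ge h) x) := by
  classical
  -- the thread associated to a point
  have key : ∀ ⦃α : ι⦄ (hα : α < δ) (x : X α),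
      ∃ y : X δ, ∀ γ (hγ : γ < δ),
        r hγ.le y = if h : α ≤ γ then j h x else r (le_of_not_ge h) x := by
    intro α hα x
    refine exists_lift hseq hne
      (fun γ _ => if h : α ≤ γ then j h x else r (le_of_not_ge h) x) ?_
    intro γ γ' h hγ'
    by_cases h1 : α ≤ γ
    · rw [dif_pos h1, dif_pos (h1.trans h)]
      rw [← jcomp hγ' h1 h x, jsec hγ' h (j h1 x)]
    · rw [dif_neg h1]
      by_cases h2 : α ≤ γ'
      · rw [dif_pos h2]
        have hγα : γ ≤ α := le_of_not_ge h1
        calc r h (j h2 x) = r hγα (r h2 (j h2 x)) := by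
              rw [hseq.map_comp hγα h2 (j h2 x)]
            _ = r hγα x := by rw [jsec hγ' h2 x]
      · rw [dif_neg h2]
        exact hseq.map_comp h (le_of_not_ge h2) x
  refine ⟨fun α hα x => (key hα x).choose, ?_, fun α hα γ hγ x => (key hα x).choose_spec γ hγ⟩
  intro α hα
  refine continuous_of_comp hseq hne hlim (fun γ hγ => ?_)
  have heq : (fun z : X α => r hγ.le ((key hα z).choose)) =
      fun z : X α => if h : α ≤ γ then j h z else r (le_of_not_ge h) z :=
    funext fun z => (key hα z).choose_spec γ hγ
  rw [heq]
  by_cases h : α ≤ γ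
  · simpa [dif_pos h] using jcont hγ h
  · simpa [dif_neg h] using hseq.continuous (le_of_not_ge h)

/-- A partial right inverse, defined (meaningfully) on a lower set `dom`. -/
structure PartialRI (r : ∀ ⦃α β : ι⦄, α ≤ β → X β → X α) where
  dom : Set ι
  lower : IsLowerSet dom
  toFun : ∀ ⦃α β : ι⦄, α ≤ β → X α → X β
  cont : ∀ ⦃α β : ι⦄, β ∈ dom → ∀ (h : α ≤ β), Continuous (toFun h)
  sec : ∀ ⦃α β : ι⦄, β ∈ dom → ∀ (h : α ≤ β) (x : X α), r h (toFun h x) = x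
  comp : ∀ ⦃α β γ : ι⦄, γ ∈ dom → ∀ (h₁ : α ≤ β) (h₂ : β ≤ γ) (x : X α),
    toFun h₂ (toFun h₁ x) = toFun (h₁.trans h₂) x

/-- Extension order on partial right inverses. -/
def PRle (p q : PartialRI (X := X) r) : Prop :=
  p.dom ⊆ q.dom ∧ ∀ ⦃α β : ι⦄, β ∈ p.dom → ∀ (h : α ≤ β) (x : X α),
    p.toFun h x = q.toFun h x

lemma PRle_trans {p q s : PartialRI (X := X) r} (h1 : PRle p q) (h2 : PRle q s) :
    PRle p s := by
  refine ⟨h1.1.trans h2.1, fun α β hβ h x => ?_⟩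
  rw [h1.2 hβ h x, h2.2 (h1.1 hβ) h x]

lemma PRle_chain_bound (hseq : IsContInvSeq r) (c : Set (PartialRI (X := X) r))
    (hc : IsChain PRle c) : ∃ ub, ∀ p ∈ c, PRle p ub := by
  classical
  set D : Set ι := {β | ∃ p ∈ c, β ∈ p.dom} with hD
  set F : ∀ ⦃α β : ι⦄, α ≤ β → X α → X β := fun α β h x =>
    if hb : ∃ p ∈ c, β ∈ p.dom then hb.choose.toFun h x else dfltSec hseq h x with hF
  have agree : ∀ p ∈ c, ∀ ⦃α β : ι⦄ (hβ : β ∈ p.dom) (h : α ≤ β) (x : X α),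
      F h x = p.toFun h x := by
    intro p hp α β hβ h x
    have hb : ∃ q ∈ c, β ∈ q.dom := ⟨p, hp, hβ⟩
    have hq := hb.choose_spec
    simp only [F, dif_pos hb]
    rcases eq_or_ne hb.choose p with heq | hne
    · rw [heq]
    · rcases hc hq.1 hp hne with hle | hle
      · exact (hle.2 hq.2 h x)
      · exact (hle.2 hβ h x).symm
  have memD : ∀ ⦃β : ι⦄, β ∈ D → ∃ p ∈ c, β ∈ p.dom := fun β hβ => hβ
  refine ⟨⟨D, ?_, F, ?_, ?_, ?_⟩, ?_⟩
  · intro β β' hle hβ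
    obtain ⟨p, hp, hβp⟩ := memD hβ
    exact ⟨p, hp, p.lower hle hβp⟩
  · intro α β hβ h
    obtain ⟨p, hp, hβp⟩ := memD hβ
    have : F h = p.toFun h := funext fun x => agree p hp hβp h x
    rw [this]; exact p.cont hβp h
  · intro α β hβ h x
    obtain ⟨p, hp, hβp⟩ := memD hβ
    rw [agree p hp hβp h x]; exact p.sec hβp h x
  · intro α β γ hγ h₁ h₂ x
    obtain ⟨p, hp, hγp⟩ := memD hγ
    have hβp : β ∈ p.dom := p.lower h₂ hγp
    rw [agree p hp hβp h₁ x, agree p hp hγp h₂ _, agree p hp hγp (h₁.trans h₂) x]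
    exact p.comp hγp h₁ h₂ x
  · intro p hp
    exact ⟨fun β hβ => ⟨p, hp, hβ⟩, fun α β hβ h x => (agree p hp hβ h x).symm⟩

end Aux

/-- a continuous inverse sequence of compact Hausdorff spaces, indexed by
an ordinal (here: a well-ordered set `ι`), all of whose successor bonding maps
`r^{α+1}_α` are retractions, admits a right inverse: a family of continuous maps
`i^β_α : X α → X β` with `i^α_α = id`, `r^β_α ∘ i^β_α = id` and `i^γ_β ∘ i^β_α = i^γ_α`. -/
theorem statement6 {ι : Type*} [LinearOrder ι] [WellFoundedLT ι]
    {X : ι → Type u} [∀ α, TopologicalSpace (X α)] [∀ α, CompactSpace (X α)]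
    [∀ α, T2Space (X α)]
    (r : ∀ ⦃α β : ι⦄, α ≤ β → X β → X α)
    (hseq : IsContInvSeq r)
    (hsucc : ∀ (α β : ι) (h : α < β), (∀ γ, α < γ → β ≤ γ) → IsRetraction (r h.le)) :
    ∃ i : ∀ ⦃α β : ι⦄, α ≤ β → X α → X β,
      (∀ ⦃α β : ι⦄ (h : α ≤ β), Continuous (i h)) ∧
      (∀ (α : ι) (x : X α), i (le_refl α) x = x) ∧
      (∀ ⦃α β : ι⦄ (h : α ≤ β) (x : X α), r h (i h x) = x) ∧
      (∀ ⦃α β γ : ι⦄ (h₁ : α ≤ β) (h₂ : β ≤ γ) (x : X α),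
        i h₂ (i h₁ x) = i (h₁.trans h₂) x) := by
  classical
  obtain ⟨M, hMmax⟩ := exists_maximal_of_chains_bounded
    (PRle_chain_bound hseq) (@fun _ _ _ h1 h2 => PRle_trans h1 h2)
  have Mrefl : ∀ ⦃α⦄, α ∈ M.dom → ∀ (h : α ≤ α) (x : X α), M.toFun h x = x :=
    fun α hα h x => row_refl hseq (fun h' x' => M.sec hα h' x') h x
  have hall : ∀ γ : ι, γ ∈ M.dom := by
    by_contra huniv
    push_neg at huniv
    obtain ⟨β0, hβ0⟩ := huniv
    have hcompl : (M.domᶜ).Nonempty := ⟨β0, hβ0⟩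
    set β := WellFounded.min wellFounded_lt (M.domᶜ) hcompl with hβdef
    have hβmem : β ∈ M.domᶜ := WellFounded.min_mem _ _ _
    have hβmin : ∀ γ, γ < β → γ ∈ M.dom := by
      intro γ hγ
      by_contra hγ'
      exact WellFounded.not_lt_min wellFounded_lt _ hγ' hγ
    have hdomIio : ∀ ⦃γ⦄, γ ∈ M.dom → γ < β := by
      intro γ hγ
      rcases lt_or_ge γ β with h | h
      · exact h
      · exact absurd (M.lower h hγ) hβmem
    -- construct the new top row
    obtain ⟨f, fcont, fsec, fglue⟩ :
        ∃ f : ∀ ⦃α : ι⦄, α < β → X α → X β,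
          (∀ ⦃α : ι⦄ (hα : α < β), Continuous (f hα)) ∧
          (∀ ⦃α : ι⦄ (hα : α < β) (x : X α), r hα.le (f hα x) = x) ∧
          (∀ ⦃α β' : ι⦄ (h₁ : α ≤ β') (hβ' : β' < β) (x : X α),
            f hβ' (M.toFun h₁ x) = f (h₁.trans_lt hβ') x) := by
      by_cases hne : ∃ α, α < β
      · by_cases hmax : ∃ σ, σ < β ∧ ∀ γ, γ < β → γ ≤ σ
        · -- successor case
          obtain ⟨σ, hσ, hσmax⟩ := hmax
          obtain ⟨-, -, g, gcont, gsec⟩ := hsucc σ β hσ (fun γ hγ => by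
            by_contra hbγ
            push_neg at hbγ
            exact absurd (hσmax γ hbγ) (not_le.mpr hγ))
          have hσdom : σ ∈ M.dom := hβmin σ hσ
          refine ⟨fun α hα x => g (M.toFun (hσmax α hα) x), ?_, ?_, ?_⟩
          · intro α hα
            exact gcont.comp (M.cont hσdom _)
          · intro α hα x
            have e2 : r hσ.le (g (M.toFun (hσmax α hα) x)) = M.toFun (hσmax α hα) x :=
              congrFun gsec _
            calc r hα.le (g (M.toFun (hσmax α hα) x))
                = r (hσmax α hα) (r hσ.le (g (M.toFun (hσmax α hα) x))) :=
                  (hseq.map_comp _ _ _).symm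
              _ = r (hσmax α hα) (M.toFun (hσmax α hα) x) := by rw [e2]
              _ = x := M.sec hσdom _ x
          · intro α β' h₁ hβ' x
            have hc := M.comp hσdom h₁ (hσmax β' hβ') x
            dsimp only
            rw [hc]
        · -- limit case
          push_neg at hmax
          have hlim : ∀ α, α < β → ∃ γ, α < γ ∧ γ < β := by
            intro α hα
            obtain ⟨γ, hγβ, hγα⟩ := hmax α hα
            exact ⟨γ, hγα, hγβ⟩
          obtain ⟨f, fcont, fspec⟩ := limit_row hseq hne hlim M.toFun
            (fun α γ hγ h => M.cont (hβmin γ hγ) h)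
            (fun α γ hγ h x => M.sec (hβmin γ hγ) h x)
            (fun α β' γ hγ h₁ h₂ x => M.comp (hβmin γ hγ) h₁ h₂ x)
          refine ⟨f, fcont, ?_, ?_⟩
          · intro α hα x
            have hs := fspec hα hα x
            rw [dif_pos (le_refl α)] at hs
            rw [hs]
            exact Mrefl (hβmin α hα) _ x
          · intro α β' h₁ hβ' x
            refine hseq.limit_inj β hne hlim _ _ (fun γ hγ => ?_)
            rw [fspec hβ' hγ (M.toFun h₁ x), fspec (h₁.trans_lt hβ') hγ x]
            by_cases h2 : β' ≤ γ
            · rw [dif_pos h2, dif_pos (h₁.trans h2)]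
              exact M.comp (hβmin γ hγ) h₁ h2 x
            · rw [dif_neg h2]
              by_cases h3 : α ≤ γ
              · rw [dif_pos h3]
                have hγβ' : γ ≤ β' := le_of_not_ge h2
                have e1 : M.toFun h₁ x = M.toFun hγβ' (M.toFun h3 x) :=
                  (M.comp (hβmin β' hβ') h3 hγβ' x).symm
                rw [e1]
                exact M.sec (hβmin β' hβ') hγβ' _
              · rw [dif_neg h3]
                have hγα : γ ≤ α := le_of_not_ge h3
                have e1 : r hγα (r h₁ (M.toFun h₁ x)) = r (hγα.trans h₁) (M.toFun h₁ x) :=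
                  hseq.map_comp _ _ _
                rw [M.sec (hβmin β' hβ') h₁ x] at e1
                exact e1.symm
      · -- β is minimal
        exact ⟨fun α hα => absurd ⟨α, hα⟩ hne,
          fun α hα => absurd ⟨α, hα⟩ hne,
          fun α hα x => absurd ⟨α, hα⟩ hne,
          fun α β' h₁ hβ' x => absurd ⟨β', hβ'⟩ hne⟩
    -- the extended partial right inverse
    set F : ∀ ⦃α γ : ι⦄, α ≤ γ → X α → X γ := fun α γ h x =>
      if hγ : γ = β then
        hγ.symm ▸ (if hα : α < β then f hα x else dfltSec hseq (h.trans_eq hγ) x)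
      else if _h : γ ∈ M.dom then M.toFun h x else dfltSec hseq h x with hFdef
    have Fdom : ∀ ⦃α γ : ι⦄ (hγ : γ ∈ M.dom) (h : α ≤ γ) (x : X α),
        F h x = M.toFun h x := by
      intro α γ hγ h x
      have hneq : γ ≠ β := fun he => hβmem (he ▸ hγ)
      simp only [F, dif_neg hneq, dif_pos hγ]
    have Ftop : ∀ ⦃α : ι⦄ (hα : α < β) (h : α ≤ β) (x : X α), F h x = f hα x := by
      intro α hα h x
      simp only [F, dif_pos rfl, dif_pos hα]
    have Fself : ∀ (h : β ≤ β) (x : X β), F h x = x := by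
      intro h x
      simp only [F, dif_pos rfl, dif_neg (lt_irrefl β)]
      exact dfltSec_refl hseq _ x
    set N : PartialRI (X := X) r :=
      { dom := insert β M.dom
        lower := by
          intro γ γ' hle hγ
          rcases mem_insert_iff.mp hγ with rfl | hγ
          · rcases lt_or_eq_of_le hle with h | h
            · exact Or.inr (hβmin _ h)
            · exact Or.inl h
          · exact Or.inr (M.lower hle hγ)
        toFun := F
        cont := by
          intro α γ hγ h
          rcases mem_insert_iff.mp hγ with rfl | hγ
          · by_cases hα : α < β
            · have he : F h = f hα := funext fun x => Ftop hα h x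
              rw [he]; exact fcont hα
            · obtain rfl : α = β := le_antisymm h (not_lt.mp hα)
              have he : F h = fun x => x := funext fun x => Fself h x
              rw [he]; exact continuous_id
          · have he : F h = M.toFun h := funext fun x => Fdom hγ h x
            rw [he]; exact M.cont hγ h
        sec := by
          intro α γ hγ h x
          rcases mem_insert_iff.mp hγ with rfl | hγ
          · by_cases hα : α < β
            · rw [Ftop hα h x]; exact fsec hα x
            · obtain rfl : α = β := le_antisymm h (not_lt.mp hα)
              rw [Fself h x]; exact hseq.map_id _ x
          · rw [Fdom hγ h x]; exact M.sec hγ h x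
        comp := by
          intro α β' γ hγ h₁ h₂ x
          rcases mem_insert_iff.mp hγ with rfl | hγ
          · by_cases hβ' : β' < β
            · have hβ'd : β' ∈ M.dom := hβmin _ hβ'
              have hα : α < β := lt_of_le_of_lt h₁ hβ'
              rw [Fdom hβ'd h₁ x, Ftop hβ' h₂ _, Ftop hα (h₁.trans h₂) x]
              exact fglue h₁ hβ' x
            · obtain rfl : β' = β := le_antisymm h₂ (not_lt.mp hβ')
              rw [Fself h₂ _]
          · have hβ'd : β' ∈ M.dom := M.lower h₂ hγ
            rw [Fdom hβ'd h₁ x, Fdom hγ h₂ _, Fdom hγ (h₁.trans h₂) x]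
            exact M.comp hγ h₁ h₂ x }
    have hMN : PRle M N := ⟨subset_insert _ _, fun α γ hγ h x => (Fdom hγ h x).symm⟩
    have hNM := hMmax N hMN
    exact hβmem (hNM.1 (mem_insert β _))
  exact ⟨M.toFun, fun α γ h => M.cont (hall γ) h,
    fun α x => Mrefl (hall α) _ x,
    fun α γ h x => M.sec (hall γ) h x,
    fun α β' γ h₁ h₂ x => M.comp (hall γ) h₁ h₂ x⟩
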